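/- Let H = 2e^{e²} and suppose 1/|ζ(σ+it)| ≤ 4/(σ − 1/2) for 1/2 < σ ≤ 3/2 and 0 ≤ t ≤ H. Then for x ≥ 1, (1/2π) · x^{-1/2} ∫_{-H}^{H} |ζ(−1/2+it)|^{-1} / √(1/4 + t²) dt < 41.155/√x. -/

import Mathlib

open Complex Real

lemma abs_cos_mul_Gamma (t : ℝ) :
    ‖Complex.cos (π * (3/2 - t*I)/2) * Complex.Gamma (1/2 - t*I)‖
      = Real.sqrt (π/2) := by
  set z := Complex.cos (π * (3/2 - t*I)/2) * Complex.Gamma (1/2 - t*I) with hz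
  have hconj : (starRingEnd ℂ) z = Complex.cos (π * (3/2 + t*I)/2) * Complex.Gamma (1/2 + t*I) := by
    rw [hz, map_mul, ← Complex.cos_conj, ← Complex.Gamma_conj]
    congr 2 <;>
      simp only [map_div₀, map_mul, map_sub, map_add, Complex.conj_ofReal, Complex.conj_I,
        map_ofNat, map_one] <;> ring
  have hcc : Complex.cos (π * (3/2 - t*I)/2) * Complex.cos (π * (3/2 + t*I)/2)
      = (Real.cosh (π * t) : ℂ) / 2 := by
    have expand : ∀ X Y : ℂ, Complex.cos X * Complex.cos Y
        = (Complex.cos (X + Y) + Complex.cos (X - Y))/2 := by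
      intro X Y; rw [Complex.cos_add, Complex.cos_sub]; ring
    rw [expand]
    have h1 : (π * (3/2 - t*I)/2 + π * (3/2 + t*I)/2 : ℂ) = ((3 * π / 2 : ℝ) : ℂ) := by
      push_cast; ring
    have h2 : (π * (3/2 - t*I)/2 - π * (3/2 + t*I)/2 : ℂ) = -(((π * t : ℝ) : ℂ) * I) := by
      push_cast; ring
    rw [h1, h2, Complex.cos_neg, Complex.cos_mul_I, Complex.ofReal_cosh, ← Complex.ofReal_cos]
    have : Real.cos (3 * π / 2) = 0 := by
      rw [show (3 * π / 2 : ℝ) = π + π / 2 by ring, Real.cos_add]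
      simp
    rw [this]
    push_cast
    ring
  have hGG : Complex.Gamma (1/2 - t*I) * Complex.Gamma (1/2 + t*I)
      = (π : ℂ) / (Real.cosh (π * t) : ℂ) := by
    have := Complex.Gamma_mul_Gamma_one_sub (1/2 - t*I)
    rw [show (1 : ℂ) - (1/2 - t*I) = 1/2 + t*I by ring] at this
    rw [this]
    congr 1
    rw [show (π : ℂ) * (1/2 - t*I) = (π : ℂ)/2 - ((π * t : ℝ):ℂ) * I by push_cast; ring,
      Complex.sin_pi_div_two_sub, Complex.cos_mul_I, Complex.ofReal_cosh]
  have hzz : z * (starRingEnd ℂ) z = ((π/2 : ℝ) : ℂ) := by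
    have hch : ((Real.cosh (π * t) : ℝ) : ℂ) ≠ 0 :=
      Complex.ofReal_ne_zero.mpr (Real.cosh_pos (x := π * t)).ne'
    rw [hconj, hz,
      show Complex.cos (π * (3/2 - t*I)/2) * Complex.Gamma (1/2 - t*I) *
        (Complex.cos (π * (3/2 + t*I)/2) * Complex.Gamma (1/2 + t*I))
      = (Complex.cos (π * (3/2 - t*I)/2) * Complex.cos (π * (3/2 + t*I)/2)) *
        (Complex.Gamma (1/2 - t*I) * Complex.Gamma (1/2 + t*I)) from by ring, hcc, hGG]
    have hch' : Complex.cosh ((π:ℂ) * (t:ℂ)) ≠ 0 := by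
      rw [show ((π:ℂ) * t) = ((π*t : ℝ):ℂ) by push_cast; ring, ← Complex.ofReal_cosh]
      exact_mod_cast hch
    push_cast
    field_simp [hch']
  have hns : Complex.normSq z = π / 2 := by
    have := Complex.mul_conj z
    rw [hzz] at this  -- careful direction
    exact_mod_cast congrArg Complex.re this.symm
  rw [Complex.norm_def, hns]

lemma zeta_conj_of_lt_re {s : ℂ} (hs : 1 < s.re) :
    riemannZeta ((starRingEnd ℂ) s) = (starRingEnd ℂ) (riemannZeta s) := by
  rw [zeta_eq_tsum_one_div_nat_cpow hs,
    zeta_eq_tsum_one_div_nat_cpow (by simpa using hs), Complex.conj_tsum]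
  congr 1
  funext n
  rw [map_div₀, map_one]
  congr 1
  rw [Complex.cpow_conj _ _ (by rw [Complex.natCast_arg]; exact Real.pi_ne_zero.symm),
    Complex.conj_natCast]


lemma zeta_abs_half (t : ℝ) :
    ‖riemannZeta ((-(1/2 : ℝ) : ℂ) + t * I)‖
      = Real.sqrt (1/4 + t^2) / (2*π) * ‖riemannZeta (3/2 - t*I)‖ := by
  have hre : ((3:ℂ)/2 - t*I).re = 3/2 := by simp
  have hs1 : ∀ n : ℕ, (3/2 - t*I : ℂ) ≠ -n := by
    intro n h
    have := congrArg Complex.re h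
    rw [hre] at this
    simp at this
    norm_num at this
    have hn : (0:ℝ) ≤ n := Nat.cast_nonneg n
    nlinarith
  have hs2 : (3/2 - t*I : ℂ) ≠ 1 := by
    intro h
    have := congrArg Complex.re h
    rw [hre] at this
    norm_num at this
  have key := riemannZeta_one_sub hs1 hs2
  have harg : ((-(1/2 : ℝ) : ℂ)) + t*I = 1 - (3/2 - t*I) := by push_cast; ring
  have hΓ : Complex.Gamma (3/2 - t*I) = (1/2 - t*I) * Complex.Gamma (1/2 - t*I) := by
    rw [show (3/2 - t*I : ℂ) = (1/2 - t*I) + 1 by ring]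
    refine Complex.Gamma_add_one _ ?_
    intro h
    have := congrArg Complex.re h
    simp at this
  rw [harg, key, hΓ]
  rw [show (2 : ℂ) * (2 * ↑π) ^ (-(3/2 - ↑t * I)) * ((1/2 - ↑t * I) * Complex.Gamma (1/2 - ↑t * I)) *
        Complex.cos (↑π * (3/2 - ↑t * I) / 2) * riemannZeta (3/2 - ↑t * I)
      = 2 * (2 * ↑π) ^ (-(3/2 - ↑t * I)) * (1/2 - ↑t * I) *
        (Complex.cos (↑π * (3/2 - ↑t * I) / 2) * Complex.Gamma (1/2 - ↑t * I)) *
        riemannZeta (3/2 - ↑t * I) from by ring]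
  rw [norm_mul, norm_mul, norm_mul, norm_mul, abs_cos_mul_Gamma]
  have habs1 : ‖(2 * (π:ℂ)) ^ (-(3/2 - (t:ℂ)*I))‖ = (2*π) ^ (-(3/2) : ℝ) := by
    rw [show (2 * (π:ℂ)) = ((2*π : ℝ) : ℂ) by push_cast; ring]
    rw [Complex.norm_cpow_eq_rpow_re_of_pos (by positivity)]
    congr 1
    simp
  have habs2 : ‖(1:ℂ)/2 - t*I‖ = Real.sqrt (1/4 + t^2) := by
    rw [show ((1:ℂ)/2 - t*I) = ((1/2 : ℝ) : ℂ) + ((-t : ℝ) : ℂ) * I by push_cast; ring,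
      Complex.norm_add_mul_I]
    congr 1
    ring
  rw [habs1, habs2, Complex.norm_two]
  have h4 : Real.sqrt (2*π) = 2 * Real.sqrt (π/2) := by
    rw [show (2*π:ℝ) = 4 * (π/2) by ring, Real.sqrt_mul (by norm_num),
      show (4:ℝ) = 2^2 by norm_num, Real.sqrt_sq (by norm_num)]
  have h5 : (2*π : ℝ) ^ (-(3/2) : ℝ) = ((2*π) * Real.sqrt (2*π))⁻¹ := by
    rw [Real.rpow_neg (by positivity)]
    congr 1
    rw [show ((3:ℝ)/2) = 1 + 1/2 by norm_num, Real.rpow_add (by positivity), Real.rpow_one,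
      ← Real.sqrt_eq_rpow]
  rw [h5, h4]
  have hπ2 : (0:ℝ) < Real.sqrt (π/2) := Real.sqrt_pos.mpr (by positivity)
  field_simp


theorem I4_bound (x : ℝ) (hx : 1 ≤ x)
    (hzeta : ∀ σ t : ℝ, 1 / 2 < σ → σ ≤ 3 / 2 → 0 ≤ t → t ≤ 2 * Real.exp (Real.exp 2) →
      1 / ‖riemannZeta (σ + t * Complex.I)‖ ≤ 4 / (σ - 1 / 2)) :
    (1 / (2 * π)) * x ^ (-(1 : ℝ) / 2) *
        ∫ t in (-(2 * Real.exp (Real.exp 2)))..(2 * Real.exp (Real.exp 2)),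
          (‖riemannZeta (-(1 / 2 : ℝ) + t * Complex.I)‖)⁻¹ /
            Real.sqrt (1 / 4 + t ^ 2) <
      41.155 / Real.sqrt x := by
  set H := 2 * Real.exp (Real.exp 2) with hH
  have hHpos : 0 < H := by positivity
  have hxpos : (0:ℝ) < x := lt_of_lt_of_le one_pos hx
  have hsx : 0 < Real.sqrt x := Real.sqrt_pos.mpr hxpos
  -- positivity of |ζ(3/2 - t i)|
  have hzpos : ∀ t : ℝ, 0 < ‖riemannZeta (3/2 - t*I)‖ := by
    intro t
    refine norm_pos_iff.mpr (riemannZeta_ne_zero_of_one_lt_re ?_)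
    simp only [Complex.sub_re]
    norm_num
  -- the 1/|ζ| ≤ 4 bound transported to 3/2 - t i
  have hinv4 : ∀ t : ℝ, |t| ≤ H → (‖riemannZeta (3/2 - t*I)‖)⁻¹ ≤ 4 := by
    intro t ht
    have h1 : ‖riemannZeta (3/2 - t*I)‖
        = ‖riemannZeta ((|t| : ℝ) * I + 3/2)‖ := by
      rcases le_or_gt 0 t with h | h
      · rw [_root_.abs_of_nonneg h]
        have : ((t:ℂ) * I + 3/2) = (starRingEnd ℂ) (3/2 - t*I) := by
          simp only [map_sub, map_mul, map_div₀, map_ofNat, Complex.conj_ofReal,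
            Complex.conj_I, mul_neg, neg_neg]
          ring
        rw [this, zeta_conj_of_lt_re (by simp; norm_num), Complex.norm_conj]
      · rw [abs_of_neg h]
        congr 1
        push_cast
        ring
    have h2 := hzeta (3/2) |t| (by norm_num) (le_refl _) (abs_nonneg t) ht
    rw [one_div] at h2
    have h3 : ((3/2 : ℝ) : ℂ) + (|t| : ℝ) * I = ((|t| : ℝ) : ℂ) * I + 3/2 := by push_cast; ring
    rw [h3] at h2
    rw [h1]
    calc (‖riemannZeta ((|t| : ℝ) * I + 3/2)‖)⁻¹ ≤ 4 / ((3:ℝ)/2 - 1/2) := h2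
    _ = 4 := by norm_num
  -- rewrite of the integrand
  have key : ∀ t : ℝ, (‖riemannZeta ((-(1/2 : ℝ) : ℂ) + t * I)‖)⁻¹ /
      Real.sqrt (1/4 + t^2)
      = 2*π / ((1/4 + t^2) * ‖riemannZeta (3/2 - t*I)‖) := by
    intro t
    have hsq : 0 < (1/4 + t^2 : ℝ) := by positivity
    have hs : Real.sqrt (1/4 + t^2) * Real.sqrt (1/4 + t^2) = 1/4 + t^2 :=
      Real.mul_self_sqrt hsq.le
    have hspos : 0 < Real.sqrt (1/4 + t^2) := Real.sqrt_pos.mpr hsq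
    rw [zeta_abs_half t]
    have h1 : (Real.sqrt (1/4+t^2)/(2*π) * ‖riemannZeta (3/2 - t*I)‖)⁻¹
        = 2*π/(Real.sqrt (1/4+t^2) * ‖riemannZeta (3/2 - t*I)‖) := by
      rw [div_mul_eq_mul_div, inv_div]
    rw [h1, div_div,
      show Real.sqrt (1/4+t^2) * ‖riemannZeta (3/2 - t*I)‖ * Real.sqrt (1/4+t^2)
        = (Real.sqrt (1/4+t^2) * Real.sqrt (1/4+t^2)) * ‖riemannZeta (3/2 - t*I)‖
        from by ring, hs]
  -- pointwise bound on [-H, H]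
  have hbound : ∀ t ∈ Set.Icc (-H) H,
      (‖riemannZeta ((-(1/2 : ℝ) : ℂ) + t * I)‖)⁻¹ / Real.sqrt (1/4 + t^2)
        ≤ 8*π / (1/4 + t^2) := by
    intro t htmem
    rw [key t]
    have hsq : 0 < (1/4 + t^2 : ℝ) := by positivity
    have h4 : (‖riemannZeta (3/2 - t*I)‖)⁻¹ ≤ 4 :=
      hinv4 t (abs_le.mpr ⟨htmem.1, htmem.2⟩)
    have : 2*π / ((1/4 + t^2) * ‖riemannZeta (3/2 - t*I)‖)
        = (2*π / (1/4 + t^2)) * (‖riemannZeta (3/2 - t*I)‖)⁻¹ := by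
      rw [div_mul_eq_div_div, div_eq_mul_inv (2*π / (1/4+t^2))]
    rw [this]
    calc (2*π / (1/4 + t^2)) * (‖riemannZeta (3/2 - t*I)‖)⁻¹
        ≤ (2*π / (1/4 + t^2)) * 4 := by
          apply mul_le_mul_of_nonneg_left h4 (by positivity)
      _ = 8*π / (1/4 + t^2) := by ring
  -- continuity of the integrand
  have hmapc : Continuous fun t : ℝ => riemannZeta (3/2 - t*I) := by
    rw [continuous_iff_continuousAt]
    intro t
    have h1 : ContinuousAt riemannZeta (3/2 - t*I) := by
      refine (differentiableAt_riemannZeta ?_).continuousAt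
      intro h
      have := congrArg Complex.re h
      simp at this
      norm_num at this
    exact ContinuousAt.comp (f := fun t : ℝ => ((3:ℂ)/2 - t*I)) h1
      (Continuous.continuousAt (by fun_prop))
  have hcont : Continuous (fun t : ℝ =>
      (‖riemannZeta ((-(1/2:ℝ):ℂ) + t * I)‖)⁻¹ / Real.sqrt (1/4 + t^2)) := by
    have heq : (fun t : ℝ => (‖riemannZeta ((-(1/2:ℝ):ℂ) + t*I)‖)⁻¹ /
        Real.sqrt (1/4+t^2))
        = fun t : ℝ => 2*π / ((1/4 + t^2) * ‖riemannZeta (3/2 - (t:ℂ)*I)‖) := by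
      funext t; exact key t
    rw [heq]
    apply Continuous.div continuous_const
    · exact (continuous_const.add (continuous_pow 2)).mul (continuous_norm.comp hmapc)
    · intro t
      exact (mul_pos (by positivity) (hzpos t)).ne'
  have hIf : IntervalIntegrable (fun t : ℝ =>
      (‖riemannZeta ((-(1/2:ℝ):ℂ) + t * I)‖)⁻¹ / Real.sqrt (1/4 + t^2))
      MeasureTheory.volume (-H) H := hcont.intervalIntegrable _ _
  have hgc : Continuous fun t : ℝ => 8*π/(1/4+t^2) :=
    continuous_const.div (continuous_const.add (continuous_pow 2)) (fun t => by positivity)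
  have hIg : IntervalIntegrable (fun t : ℝ => 8*π/(1/4+t^2)) MeasureTheory.volume (-H) H :=
    hgc.intervalIntegrable _ _
  have hmono := intervalIntegral.integral_mono_on (by linarith : -H ≤ H) hIf hIg hbound
  have hval : (∫ t in (-H)..H, 8*π/(1/4+t^2)) ≤ 16*π^2 := by
    have heq2 : ∀ t : ℝ, 8*π/(1/4+t^2) = (32*π) * (fun u : ℝ => (1+u^2)⁻¹) (2*t) := by
      intro t
      have h1 : ((1:ℝ)/4 + t^2) ≠ 0 := by positivity
      have h2 : ((1:ℝ) + (2*t)^2) ≠ 0 := by positivity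
      simp only
      field_simp
      ring
    calc (∫ t in (-H)..H, 8*π/(1/4+t^2))
        = ∫ t in (-H)..H, (32*π) * (fun u : ℝ => (1+u^2)⁻¹) (2*t) := by
          exact intervalIntegral.integral_congr (fun t _ => heq2 t)
      _ = (32*π) * ∫ t in (-H)..H, (fun u : ℝ => (1+u^2)⁻¹) (2*t) :=
          intervalIntegral.integral_const_mul _ _
      _ = (32*π) * ((2:ℝ)⁻¹ * ∫ u in (2*(-H))..(2*H), ((1:ℝ)+u^2)⁻¹) := by
          rw [intervalIntegral.integral_comp_mul_left (fun u : ℝ => (1+u^2)⁻¹) two_ne_zero,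
            smul_eq_mul]
      _ = 16*π * (Real.arctan (2*H) - Real.arctan (2*(-H))) := by
          rw [show (∫ u in (2*(-H))..(2*H), ((1:ℝ)+u^2)⁻¹)
            = Real.arctan (2*H) - Real.arctan (2*(-H)) from by
              simpa using integral_inv_one_add_sq (a := 2*(-H)) (b := 2*H)]
          ring
      _ ≤ 16*π^2 := by
          nlinarith [Real.arctan_lt_pi_div_two (2*H), Real.neg_pi_div_two_lt_arctan (2*(-H)),
            Real.pi_pos]
  have hIle := le_trans hmono hval
  have hxr : x ^ (-(1:ℝ)/2) = (Real.sqrt x)⁻¹ := by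
    rw [show (-(1:ℝ)/2) = -(1/2 : ℝ) by norm_num, Real.rpow_neg hxpos.le,
      ← Real.sqrt_eq_rpow]
  calc (1 / (2 * π)) * x ^ (-(1 : ℝ) / 2) *
        ∫ t in (-H)..H, (‖riemannZeta (-(1/2:ℝ) + t * Complex.I)‖)⁻¹ /
          Real.sqrt (1/4 + t^2)
      ≤ (1 / (2 * π)) * x ^ (-(1 : ℝ) / 2) * (16*π^2) := by
        apply mul_le_mul_of_nonneg_left hIle (by positivity)
    _ = 8*π / Real.sqrt x := by
        rw [hxr]
        field_simp
        ring
    _ < 41.155 / Real.sqrt x := by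
        rw [div_lt_div_iff₀ hsx hsx]
        nlinarith [Real.pi_lt_d2, hsx]
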